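/- If the family of populations of a PMA is laminar and all constraints are maximum quotas (no minimum targets), then the greedy choice function satisfies the law of aggregate demand: for every candidate set C and every c in C, |Ch(C \ {c})| ≤ |Ch(C)|. -/

import Mathlib

/-! Shared definitions: PMA choice functions (greedy max-quota, Algorithm 1, Algorithm 2),
laminarity, deferred acceptance, and stability notions. -/

namespace PMA

variable {α : Type*} [DecidableEq α]

/-- A population constraint: a set of candidates together with a bound
(a maximum quota or a minimum target, depending on context). -/
abbrev Pop (α : Type*) := Finset α × ℕ

/-- A set `S` respects all maximum quotas. -/
def Feasible (maxQ : List (Pop α)) (S : Finset α) : Prop :=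
  ∀ q ∈ maxQ, (S ∩ q.1).card ≤ q.2

instance (maxQ : List (Pop α)) (S : Finset α) : Decidable (Feasible maxQ S) :=
  List.decidableBAll _ _

/-- Greedy pass: traverse candidates in the given order, accepting each candidate
whose addition violates no maximum quota. -/
def pass2 (maxQ : List (Pop α)) : List α → Finset α → Finset α
  | [], S => S
  | c :: rest, S =>
      if Feasible maxQ (insert c S) then pass2 maxQ rest (insert c S)
      else pass2 maxQ rest S

/-- Candidate `c` belongs to some population whose minimum target is not yet met by `S`. -/
def HelpsMin (minT : List (Pop α)) (S : Finset α) (c : α) : Prop :=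
  ∃ p ∈ minT, c ∈ p.1 ∧ (S ∩ p.1).card < p.2

instance (minT : List (Pop α)) (S : Finset α) (c : α) : Decidable (HelpsMin minT S c) :=
  List.decidableBEx _ _

/-- First pass of Algorithm 1: traverse candidates in order, accepting (subject to
maximum quotas) those who help meet some unmet minimum target. -/
def pass1 (maxQ minT : List (Pop α)) : List α → Finset α → Finset α
  | [], S => S
  | c :: rest, S =>
      if HelpsMin minT S c ∧ Feasible maxQ (insert c S) then
        pass1 maxQ minT rest (insert c S)
      else pass1 maxQ minT rest S

/-- Algorithm 1 choice function: two passes over the candidates of `C`,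
in the priority order given by the list `order`. -/
def choice1 (maxQ minT : List (Pop α)) (order : List α) (C : Finset α) : Finset α :=
  pass2 maxQ (order.filter fun c => decide (c ∈ C))
    (pass1 maxQ minT (order.filter fun c => decide (c ∈ C)) ∅)

/-- The greedy max-quota choice function (no minimum targets), with the priority order
given by the linear order on candidates. -/
def greedy [LinearOrder α] (maxQ : List (Pop α)) (C : Finset α) : Finset α :=
  pass2 maxQ (C.sort (· ≤ ·)) ∅

/-- The greedy max-quota choice function with an explicit priority list. -/
def greedyL (maxQ : List (Pop α)) (order : List α) (C : Finset α) : Finset α :=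
  pass2 maxQ (order.filter fun c => decide (c ∈ C)) ∅

/-- The number of populations with a minimum target not yet met by `S` to which `c` belongs. -/
def nUnmet (minT : List (Pop α)) (S : Finset α) (c : α) : ℕ :=
  (minT.filter fun p => decide (c ∈ p.1 ∧ (S ∩ p.1).card < p.2)).length

/-- The candidates of `R` maximizing the number of unmet minimum targets they help. -/
def bestSet [LinearOrder α] (minT : List (Pop α)) (S R : Finset α) : Finset α :=
  R.filter fun c => ∀ d ∈ R, nUnmet minT S d ≤ nUnmet minT S c

lemma bestSet_nonempty [LinearOrder α] (minT : List (Pop α)) (S : Finset α) {R : Finset α}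
    (hR : R.Nonempty) : (bestSet minT S R).Nonempty := by
  obtain ⟨b, hb, hmax⟩ := R.exists_max_image (nUnmet minT S) hR
  exact ⟨b, Finset.mem_filter.mpr ⟨hb, hmax⟩⟩

/-- The next candidate processed by Algorithm 2: among `R`, maximize the number of unmet
minimum targets helped, breaking ties by the priority order. -/
def pick [LinearOrder α] (minT : List (Pop α)) (S : Finset α) {R : Finset α}
    (hR : R.Nonempty) : α :=
  (bestSet minT S R).min' (bestSet_nonempty minT S hR)

lemma pick_mem [LinearOrder α] (minT : List (Pop α)) (S : Finset α) {R : Finset α}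
    (hR : R.Nonempty) : pick minT S hR ∈ R :=
  Finset.filter_subset _ _ (Finset.min'_mem _ _)

/-- Main loop of Algorithm 2: `R` is the set of unprocessed candidates, `S` the chosen set. -/
def choice2Go [LinearOrder α] (maxQ minT : List (Pop α)) (R S : Finset α) : Finset α :=
  if hR : R.Nonempty then
    choice2Go maxQ minT (R.erase (pick minT S hR))
      (if Feasible maxQ (insert (pick minT S hR) S) then insert (pick minT S hR) S else S)
  else S
  termination_by R.card
  decreasing_by exact Finset.card_erase_lt_of_mem (pick_mem minT S hR)

/-- Algorithm 2 choice function. -/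
def choice2 [LinearOrder α] (maxQ minT : List (Pop α)) (C : Finset α) : Finset α :=
  choice2Go maxQ minT C ∅

/-- A family of populations is laminar: any two are disjoint or nested. -/
def Laminar (pops : List (Pop α)) : Prop :=
  ∀ p ∈ pops, ∀ q ∈ pops, Disjoint p.1 q.1 ∨ p.1 ⊆ q.1 ∨ q.1 ⊆ p.1

/-- The sets of the populations carrying a positive minimum target. -/
def minTargetSets (minT : List (Pop α)) : Set (Finset α) :=
  {P | ∃ t, (P, t) ∈ minT ∧ 0 < t}

/-- A family of sets is a union of pairwise-disjoint chains: it can be partitioned into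
subfamilies, each totally ordered by inclusion, with sets in different subfamilies disjoint. -/
def UnionOfDisjointChains (F : Set (Finset α)) : Prop :=
  ∃ Part : Set (Set (Finset α)), ⋃₀ Part = F ∧ (∀ c ∈ Part, IsChain (· ⊆ ·) c) ∧
    Part.Pairwise fun c c' => ∀ P ∈ c, ∀ Q ∈ c', Disjoint P Q

section DA

variable {β : Type*} [Fintype α] [DecidableEq β]

/-- The institution to which candidate `c` currently applies: the most-preferred institution
on her list that has not yet rejected her (`none` if her list is exhausted). -/
def applyTo (prefs : α → List β) (rej : α → Finset β) (c : α) : Option β :=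
  (prefs c).find? fun m => decide (m ∉ rej c)

/-- The set of candidates currently applying to institution `m`. -/
def applicants (prefs : α → List β) (rej : α → Finset β) (m : β) : Finset α :=
  Finset.univ.filter fun c => applyTo prefs rej c = some m

/-- One round of candidate-proposing deferred acceptance: each candidate applies to her
most-preferred not-yet-rejecting institution; each institution keeps its choice from its
applicants and rejects the rest. `rej c` is the set of institutions that have rejected `c`. -/
def daRound (Ch : β → Finset α → Finset α) (prefs : α → List β) (rej : α → Finset β) :
    α → Finset β := fun c =>
  match applyTo prefs rej c with
  | none => rej c
  | some m => if c ∈ Ch m (applicants prefs rej m) then rej c else insert m (rej c)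

variable [Fintype β]

/-- The rejection sets at the end of candidate-proposing deferred acceptance (running enough
rounds to guarantee that a fixed point, i.e. a round with no rejections, has been reached). -/
def daRej (Ch : β → Finset α → Finset α) (prefs : α → List β) : α → Finset β :=
  (daRound Ch prefs)^[Fintype.card α * Fintype.card β + 1] fun _ => ∅

/-- The matching produced by candidate-proposing deferred acceptance. -/
def daMatch (Ch : β → Finset α → Finset α) (prefs : α → List β) : α → Option β :=
  applyTo prefs (daRej Ch prefs)

end DA

section Stability

variable {β : Type*} [DecidableEq β]

/-- Candidate `c` strictly prefers institution `m` to the assignment `o`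
(being unmatched, `none`, is worse than any institution on her list). -/
def Prefers (prefs : α → List β) (c : α) (m : β) : Option β → Prop
  | none => m ∈ prefs c
  | some m' => m ∈ prefs c ∧ (prefs c).idxOf m < (prefs c).idxOf m'

/-- Candidate `c` weakly prefers assignment `o` to assignment `o'`. -/
def WeaklyPrefers (prefs : α → List β) (c : α) (o o' : Option β) : Prop :=
  o = o' ∨ ∃ m, o = some m ∧ Prefers prefs c m o'

variable [Fintype α]

/-- The set of candidates assigned to institution `m` by the matching `M`. -/
def assignedTo (M : α → Option β) (m : β) : Finset α :=
  Finset.univ.filter fun c => M c = some m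

/-- Individual rationality: candidates are matched only to listed institutions, and each
institution chooses all candidates assigned to it. -/
def IndivRational (Ch : β → Finset α → Finset α) (prefs : α → List β) (M : α → Option β) :
    Prop :=
  (∀ c m, M c = some m → m ∈ prefs c) ∧ ∀ m, Ch m (assignedTo M m) = assignedTo M m

/-- `(c, m)` is a blocking pair for the matching `M`. -/
def Blocks (Ch : β → Finset α → Finset α) (prefs : α → List β) (M : α → Option β)
    (c : α) (m : β) : Prop :=
  Prefers prefs c m (M c) ∧ c ∈ Ch m (insert c (assignedTo M m))

/-- Stability: individual rationality plus no blocking pairs. -/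
def StableMatching (Ch : β → Finset α → Finset α) (prefs : α → List β) (M : α → Option β) :
    Prop :=
  IndivRational Ch prefs M ∧ ∀ c m, ¬ Blocks Ch prefs M c m

/-- One step of the candidate-Pareto-improvement stage: a blocking pair `(m, c)` such that
`c` can be added to `m` without rejecting anyone is resolved by assigning `c` to `m`. -/
def ParetoStep [DecidableEq α] (Ch : β → Finset α → Finset α) (prefs : α → List β)
    (M M' : α → Option β) : Prop :=
  ∃ m c, Prefers prefs c m (M c) ∧
    Ch m (insert c (assignedTo M m)) = insert c (assignedTo M m) ∧
    M' = Function.update M c (some m)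

end Stability

end PMA


open PMA

section Aux

variable {α : Type*} [DecidableEq α]

lemma feasible_mono {maxQ : List (Pop α)} {S T : Finset α} (hST : S ⊆ T)
    (hT : Feasible maxQ T) : Feasible maxQ S := fun q hq =>
  le_trans (Finset.card_le_card (Finset.inter_subset_inter hST (subset_refl _))) (hT q hq)

lemma subset_pass2 (maxQ : List (Pop α)) :
    ∀ (l : List α) (S : Finset α), S ⊆ pass2 maxQ l S
  | [], S => subset_refl _
  | c :: rest, S => by
      rw [pass2]
      split_ifs
      · exact (Finset.subset_insert _ _).trans (subset_pass2 maxQ rest _)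
      · exact subset_pass2 maxQ rest _

lemma pass2_subset (maxQ : List (Pop α)) :
    ∀ (l : List α) (S : Finset α), pass2 maxQ l S ⊆ S ∪ l.toFinset
  | [], S => by simp [pass2]
  | c :: rest, S => by
      rw [pass2]
      split_ifs
      · refine (pass2_subset maxQ rest _).trans ?_
        intro x hx; simp at hx ⊢; tauto
      · refine (pass2_subset maxQ rest _).trans ?_
        intro x hx; simp at hx ⊢; tauto

lemma feasible_pass2 (maxQ : List (Pop α)) :
    ∀ (l : List α) (S : Finset α), Feasible maxQ S → Feasible maxQ (pass2 maxQ l S)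
  | [], _, h => h
  | c :: rest, S, h => by
      rw [pass2]
      split_ifs with hf
      · exact feasible_pass2 maxQ rest _ hf
      · exact feasible_pass2 maxQ rest _ h

lemma pass2_maximal (maxQ : List (Pop α)) :
    ∀ (l : List α) (S : Finset α) (x : α),
      x ∈ l → x ∉ pass2 maxQ l S → ¬ Feasible maxQ (insert x (pass2 maxQ l S))
  | c :: rest, S, x, hx, hnot => by
      rw [pass2] at hnot ⊢
      split_ifs at hnot ⊢ with hf
      · rcases List.mem_cons.mp hx with rfl | hx'
        · exact absurd (subset_pass2 maxQ rest _ (Finset.mem_insert_self _ _)) hnot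
        · exact pass2_maximal maxQ rest _ x hx' hnot
      · rcases List.mem_cons.mp hx with rfl | hx'
        · intro hfeas
          exact hf (feasible_mono
            (Finset.insert_subset_insert _ (subset_pass2 maxQ rest S)) hfeas)
        · exact pass2_maximal maxQ rest _ x hx' hnot

/-- Key matroid-type lemma: for laminar max quotas, any feasible subset of `C` has
cardinality at most that of any maximal feasible subset of `C`. -/
lemma card_le_of_maximal (maxQ : List (Pop α)) (hlam : Laminar maxQ)
    {A B C : Finset α} (hAf : Feasible maxQ A)
    (hAmax : ∀ x ∈ C, x ∉ A → ¬ Feasible maxQ (insert x A))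
    (hB : B ⊆ C) (hBf : Feasible maxQ B) : B.card ≤ A.card := by
  classical
  -- "Tight" quota sets
  set Tight : Finset α → Prop := fun P => (P, (A ∩ P).card) ∈ maxQ with hTight
  -- every element of B \ A lies in a tight set
  have hexists : ∀ x ∈ B, x ∉ A → ∃ P, Tight P ∧ x ∈ P := by
    intro x hxB hxA
    have hinf := hAmax x (hB hxB) hxA
    rw [Feasible] at hinf
    push_neg at hinf
    obtain ⟨q, hq, hgt⟩ := hinf
    have hle : (A ∩ q.1).card ≤ q.2 := hAf q hq
    have hxq : x ∈ q.1 := by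
      by_contra hxq
      have : insert x A ∩ q.1 = A ∩ q.1 := by
        ext y; simp only [Finset.mem_inter, Finset.mem_insert]
        constructor
        · rintro ⟨rfl | hy, hy2⟩
          · exact absurd hy2 hxq
          · exact ⟨hy, hy2⟩
        · tauto
      rw [this] at hgt
      omega
    have hins : insert x A ∩ q.1 = insert x (A ∩ q.1) := by
      ext y; simp only [Finset.mem_inter, Finset.mem_insert]
      constructor
      · rintro ⟨rfl | hy, hy2⟩
        · exact Or.inl rfl
        · exact Or.inr ⟨hy, hy2⟩
      · rintro (rfl | ⟨hy, hy2⟩)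
        · exact ⟨Or.inl rfl, hxq⟩
        · exact ⟨Or.inr hy, hy2⟩
    have hcard : (insert x A ∩ q.1).card ≤ (A ∩ q.1).card + 1 := by
      rw [hins]; exact Finset.card_insert_le _ _
    have htight : (A ∩ q.1).card = q.2 := by omega
    refine ⟨q.1, ?_, hxq⟩
    rw [hTight]
    simpa [htight] using hq
  -- the finite collection of quota sets
  set G : Finset (Finset α) := (maxQ.map Prod.fst).toFinset with hG
  have hmemG : ∀ {P : Finset α}, Tight P → P ∈ G := by
    intro P hP
    rw [hG]
    simp only [List.mem_toFinset, List.mem_map]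
    exact ⟨(P, (A ∩ P).card), hP, rfl⟩
  -- every element of B \ A lies in a maximal tight set
  have hexmax : ∀ x ∈ B, x ∉ A →
      ∃ P, Tight P ∧ x ∈ P ∧ ∀ Q, Tight Q → P ⊆ Q → Q = P := by
    intro x hxB hxA
    obtain ⟨P, hPt, hxP⟩ := hexists x hxB hxA
    set s : Finset (Finset α) := G.filter (fun P => Tight P ∧ x ∈ P) with hs
    have hsne : s.Nonempty := ⟨P, by rw [hs]; exact Finset.mem_filter.mpr ⟨hmemG hPt, hPt, hxP⟩⟩
    obtain ⟨P0, hP0s, hP0max⟩ := s.exists_max_image Finset.card hsne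
    rw [hs] at hP0s
    obtain ⟨-, hP0t, hxP0⟩ := Finset.mem_filter.mp hP0s
    refine ⟨P0, hP0t, hxP0, ?_⟩
    intro Q hQt hPQ
    have hQs : Q ∈ s := by
      rw [hs]; exact Finset.mem_filter.mpr ⟨hmemG hQt, hQt, hPQ hxP0⟩
    exact (Finset.eq_of_subset_of_card_le hPQ (hP0max Q hQs)).symm
  -- the family of maximal tight sets meeting B \ A
  set T : Finset (Finset α) := G.filter
      (fun P => Tight P ∧ (∃ x ∈ B, x ∉ A ∧ x ∈ P) ∧
        ∀ Q, Tight Q → P ⊆ Q → Q = P) with hT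
  have hTmem : ∀ {P}, P ∈ T → Tight P ∧ ∀ Q, Tight Q → P ⊆ Q → Q = P := by
    intro P hP
    rw [hT] at hP
    obtain ⟨-, h1, -, h3⟩ := Finset.mem_filter.mp hP
    exact ⟨h1, h3⟩
  -- pairwise disjointness
  have hdisj : ∀ P ∈ T, ∀ Q ∈ T, P ≠ Q → Disjoint P Q := by
    intro P hP Q hQ hne
    obtain ⟨hPt, hPmax⟩ := hTmem hP
    obtain ⟨hQt, hQmax⟩ := hTmem hQ
    rcases hlam _ hPt _ hQt with h | h | h
    · exact h
    · exact absurd (hPmax _ hQt h) (Ne.symm hne)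
    · exact absurd (hQmax _ hPt h) hne
  -- cover
  have hcover : ∀ x ∈ B, x ∉ A → ∃ P ∈ T, x ∈ P := by
    intro x hxB hxA
    obtain ⟨P, hPt, hxP, hPmax⟩ := hexmax x hxB hxA
    refine ⟨P, ?_, hxP⟩
    rw [hT]
    exact Finset.mem_filter.mpr ⟨hmemG hPt, hPt, ⟨x, hxB, hxA, hxP⟩, hPmax⟩
  -- counting
  set U : Finset α := T.biUnion id with hU
  have hBU : B ∩ U = T.biUnion (fun P => B ∩ P) := by
    ext y
    simp only [hU, Finset.mem_inter, Finset.mem_biUnion, id]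
    tauto
  have hAU : A ∩ U = T.biUnion (fun P => A ∩ P) := by
    ext y
    simp only [hU, Finset.mem_inter, Finset.mem_biUnion, id]
    tauto
  have hcardB : (B ∩ U).card = ∑ P ∈ T, (B ∩ P).card := by
    rw [hBU]
    exact Finset.card_biUnion fun P hP Q hQ hne =>
      (hdisj P hP Q hQ hne).mono Finset.inter_subset_right Finset.inter_subset_right
  have hcardA : (A ∩ U).card = ∑ P ∈ T, (A ∩ P).card := by
    rw [hAU]
    exact Finset.card_biUnion fun P hP Q hQ hne =>
      (hdisj P hP Q hQ hne).mono Finset.inter_subset_right Finset.inter_subset_right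
  have hsum : (B ∩ U).card ≤ (A ∩ U).card := by
    rw [hcardB, hcardA]
    refine Finset.sum_le_sum fun P hP => ?_
    have hPt := (hTmem hP).1
    exact hBf (P, (A ∩ P).card) hPt
  have hsdiff : B \ U ⊆ A \ U := by
    intro x hx
    obtain ⟨hxB, hxU⟩ := Finset.mem_sdiff.mp hx
    refine Finset.mem_sdiff.mpr ⟨?_, hxU⟩
    by_contra hxA
    obtain ⟨P, hPT, hxP⟩ := hcover x hxB hxA
    exact hxU (Finset.mem_biUnion.mpr ⟨P, hPT, hxP⟩)
  calc B.card = (B ∩ U).card + (B \ U).card := (Finset.card_inter_add_card_sdiff B U).symm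
    _ ≤ (A ∩ U).card + (A \ U).card :=
        Nat.add_le_add hsum (Finset.card_le_card hsdiff)
    _ = A.card := Finset.card_inter_add_card_sdiff A U

end Aux

/-- For laminar populations with maximum quotas only, the greedy
choice function satisfies the law of aggregate demand: `|Ch(C \ {c})| ≤ |Ch(C)|`. -/
theorem greedy_lad {α : Type*} [DecidableEq α] [LinearOrder α]
    (maxQ : List (Pop α)) (hlam : Laminar maxQ)
    (C : Finset α) (c : α) (hc : c ∈ C) :
    (greedy maxQ (C.erase c)).card ≤ (greedy maxQ C).card := by
  classical
  have hempty : Feasible maxQ (∅ : Finset α) := by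
    intro q hq; simp
  have hsub : ∀ D : Finset α, greedy maxQ D ⊆ D := by
    intro D x hx
    have := pass2_subset maxQ (D.sort (· ≤ ·)) ∅ hx
    simp only [Finset.empty_union, List.mem_toFinset, Finset.mem_sort] at this
    exact this
  have hAmax : ∀ x ∈ C, x ∉ greedy maxQ C → ¬ Feasible maxQ (insert x (greedy maxQ C)) := by
    intro x hx hnot
    exact pass2_maximal maxQ (C.sort (· ≤ ·)) ∅ x ((Finset.mem_sort _).mpr hx) hnot
  exact card_le_of_maximal maxQ hlam
    (feasible_pass2 maxQ _ _ hempty) hAmax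
    ((hsub _).trans (Finset.erase_subset _ _))
    (feasible_pass2 maxQ _ _ hempty)
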